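/- Let ψ ∈ Ψ, let m, d ∈ ℕ, and let μ̄ ∈ Λ^𝒞 be an (m+2d)-regular quasi-admissible tuple. Then the quasi-admissible tuple ν̄ := μ̄ − d·ē_ψ is m-regular. -/
import Mathlib


open scoped Classical

noncomputable section

/-- A (reduced, crystallographic) root system `Φ` in the dual of a real vector space `V`,
together with a chosen coroot `α̌ ∈ V` for every root `α`. -/
structure RootSystemData (V : Type*) [AddCommGroup V] [Module ℝ V] where
  roots : Set (Module.Dual ℝ V)
  coroot : Module.Dual ℝ V → V
  finite : roots.Finite
  ne_zero : ∀ α ∈ roots, α ≠ 0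
  root_coroot_two : ∀ α ∈ roots, α (coroot α) = 2
  reflect_mem : ∀ α ∈ roots, ∀ β ∈ roots, β - β (coroot α) • α ∈ roots
  crystallographic : ∀ α ∈ roots, ∀ β ∈ roots, ∃ n : ℤ, β (coroot α) = (n : ℝ)
  reduced : ∀ α ∈ roots, ∀ c : ℝ, c • α ∈ roots → c = 1 ∨ c = -1
  span_top : Submodule.span ℝ roots = ⊤

section
variable {V : Type*} [AddCommGroup V] [Module ℝ V]

/-- The simple elements of a positive system `P`: elements which are not sums of two
elements of `P`. -/
def simplesOf (P : Set (Module.Dual ℝ V)) : Set (Module.Dual ℝ V) :=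
  {α | α ∈ P ∧ ¬∃ β ∈ P, ∃ γ ∈ P, α = β + γ}

/-- The affine root `(α, n)` viewed as the affine function `x ↦ α(x) + n`. -/
def aev (α : Module.Dual ℝ V) (n : ℤ) : V → ℝ := fun x => α x + (n : ℝ)

/-- `π : W̃ → Λ`, `w ↦ w(0)`. -/
def piL (w : Equiv.Perm V) : V := w 0

/-- Translation by `μ`, as an element of the group of permutations of `V`. -/
def transl (μ : V) : Equiv.Perm V := Equiv.addLeft μ

end

namespace RootSystemData

variable {V : Type*} [AddCommGroup V] [Module ℝ V]

variable (RS : RootSystemData V)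

/-- A point is regular if it lies on no root hyperplane. -/
def IsRegularPt (x : V) : Prop := ∀ α ∈ RS.roots, α x ≠ 0

/-- Weyl chambers of `Φ`: connected components of the set of regular points,
described by the strict sign pattern of a regular point. -/
def IsChamber (C : Set V) : Prop :=
  ∃ v, RS.IsRegularPt v ∧ C = {x | ∀ α ∈ RS.roots, 0 < α v → 0 < α x}

/-- The type `𝒞` of Weyl chambers. -/
abbrev ChamberT := {C : Set V // RS.IsChamber C}

/-- The set `Φ_C` of `C`-positive roots. -/
def pos (C : Set V) : Set (Module.Dual ℝ V) := {α | α ∈ RS.roots ∧ ∀ x ∈ C, 0 < α x}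


/-- The set `Δ_C` of `C`-simple roots. -/
def simples (C : Set V) : Set (Module.Dual ℝ V) := simplesOf (RS.pos C)

/-- The affine reflection `s_{(α,n)} : x ↦ x − (α(x)+n) • α̌`. -/
def sAff (α : Module.Dual ℝ V) (n : ℤ) : Equiv.Perm V :=
  if h : α (RS.coroot α) = 2 then
    Function.Involutive.toPerm (fun x => x - (α x + (n : ℝ)) • RS.coroot α) (by
      intro x
      simp only [map_sub, map_smul, smul_eq_mul, h]
      match_scalars <;> ring)
  else Equiv.refl V


/-- Positivity of an affine function `f` (which is required to be an affine root
`(α,n)`), relative to a positive system `P ⊂ Φ`:  `n > 0`, or `n = 0 ∧ α ∈ P`. -/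
def IsPosAff (P : Set (Module.Dual ℝ V)) (f : V → ℝ) : Prop :=
  ∃ α ∈ RS.roots, ∃ n : ℤ, f = aev α n ∧ (0 < n ∨ (n = 0 ∧ α ∈ P))

/-- The subgroup of the affine Weyl group generated by the reflections `s_{(α,n)}`
with `α ∈ Φ ∩ Φ'`. -/
def affWeylOf (Φ' : Set (Module.Dual ℝ V)) : Subgroup (Equiv.Perm V) :=
  Subgroup.closure {g | ∃ α ∈ RS.roots ∩ Φ', ∃ n : ℤ, g = RS.sAff α n}

/-- The affine Weyl group `W̃ = W ⋉ Λ`, realized as the group generated by all affine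
reflections `s_{(α,n)}`. -/
def affWeyl : Subgroup (Equiv.Perm V) := RS.affWeylOf Set.univ

/-- The finite Weyl group `W`, generated by the linear reflections `s_α = s_{(α,0)}`. -/
def weyl : Subgroup (Equiv.Perm V) :=
  Subgroup.closure {g | ∃ α ∈ RS.roots, g = RS.sAff α 0}

/-- The subgroup `W̃_α` generated by the reflections `s_{(α,n)}`, `n ∈ ℤ`. -/
def reflSubgroup (α : Module.Dual ℝ V) : Subgroup (Equiv.Perm V) :=
  Subgroup.closure {g | ∃ n : ℤ, g = RS.sAff α n}


/-- The coroot lattice `Λ ⊂ V`. -/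
def corootLattice : AddSubgroup V := AddSubgroup.closure (RS.coroot '' RS.roots)


/-- The (open) fundamental alcove `A₀ ⊂ C₀`, whose closure contains `0`. -/
def alcove (C₀ : Set V) : Set V := {x | ∀ α ∈ RS.pos C₀, 0 < α x ∧ α x < 1}

/-- `w ∈ C`, i.e. `w(A₀) ⊂ C`. -/
def MemC (C₀ : Set V) (w : Equiv.Perm V) (C : Set V) : Prop :=
  ∀ x ∈ RS.alcove C₀, w x ∈ C

/-- The inversion set of `w`: positive affine roots `f` with `w⁻¹(f) = f ∘ w`
negative. -/
def invSet (P : Set (Module.Dual ℝ V)) (w : Equiv.Perm V) : Set (V → ℝ) :=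
  {f | RS.IsPosAff P f ∧ ¬ RS.IsPosAff P (fun x => f (w x))}

/-- The length function `l` on `W̃` determined by the fundamental alcove:
the number of inversions. -/
def len (C₀ : Set V) (w : Equiv.Perm V) : ℕ := (RS.invSet (RS.pos C₀) w).ncard

/-- The (strict) Bruhat order on `W̃`: the transitive closure of
`x < s_{(α,n)} x` whenever the length increases. -/
def bruhatLT (C₀ : Set V) : Equiv.Perm V → Equiv.Perm V → Prop :=
  Relation.TransGen (fun x y =>
    (∃ α ∈ RS.roots, ∃ n : ℤ, y = RS.sAff α n * x) ∧ RS.len C₀ x < RS.len C₀ y)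

/-- The Bruhat order `≤` on `W̃`. -/
def bruhatLE (C₀ : Set V) (x y : Equiv.Perm V) : Prop := x = y ∨ RS.bruhatLT C₀ x y

/-- One step of the ordering `<_{Φ'}`:  `x = s_{(α,n)} y <_{(α,n)} y` with `α ∈ Φ'`,
i.e. `y⁻¹((α,n)) > 0` (positivity of affine roots relative to `P`). -/
def stepRel (P Φ' : Set (Module.Dual ℝ V)) (x y : Equiv.Perm V) : Prop :=
  ∃ α ∈ RS.roots ∩ Φ', ∃ n : ℤ,
    x = RS.sAff α n * y ∧ RS.IsPosAff P (fun v => aev α n (y v))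

/-- The ordering `<_{Φ'}` on `W̃` (with affine-root positivity relative to `P`). -/
def ordLT (P Φ' : Set (Module.Dual ℝ V)) : Equiv.Perm V → Equiv.Perm V → Prop :=
  Relation.TransGen (RS.stepRel P Φ')

/-- The ordering `≤_{Φ'}` on `W̃`. -/
def ordLE (P Φ' : Set (Module.Dual ℝ V)) (x y : Equiv.Perm V) : Prop :=
  x = y ∨ RS.ordLT P Φ' x y

/-- The ordering `<_{Φ'}` on `V`: `x <_{Φ'} y` iff `y − x` is a positive linear
combination of coroots `α̌` with `α ∈ Φ'`. -/
def vecLT (Φ' : Set (Module.Dual ℝ V)) (x y : V) : Prop :=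
  ∃ s : Finset (Module.Dual ℝ V), ∃ c : Module.Dual ℝ V → ℝ,
    s.Nonempty ∧ (∀ α ∈ s, α ∈ RS.roots ∩ Φ' ∧ 0 < c α) ∧
      y - x = ∑ α ∈ s, c α • RS.coroot α

/-- The ordering `≤_{Φ'}` on `V`. -/
def vecLE (Φ' : Set (Module.Dual ℝ V)) (x y : V) : Prop := x = y ∨ RS.vecLT Φ' x y

/-- `ψ` is the fundamental weight of the chamber `C` corresponding to the simple root
`α ∈ Δ_C`:  `⟨ψ, β̌⟩ = δ_{αβ}` for `β ∈ Δ_C`. -/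
def PairsIn (C : Set V) (ψ α : Module.Dual ℝ V) : Prop :=
  α ∈ RS.simples C ∧ ∀ β ∈ RS.simples C, ψ (RS.coroot β) = if β = α then 1 else 0

/-- `ψv` is the fundamental coweight of the chamber `C` corresponding to the simple
root `α ∈ Δ_C`:  `⟨β, ψv⟩ = δ_{αβ}` for `β ∈ Δ_C`. -/
def CoPairsIn (C : Set V) (α : Module.Dual ℝ V) (ψv : V) : Prop :=
  α ∈ RS.simples C ∧ ∀ β ∈ RS.simples C, β ψv = if β = α then 1 else 0

/-- `ψ ∈ Ψ_C` with corresponding fundamental coweight `ψ̌ = ψv`. -/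
def IsFundPair (C : Set V) (ψ : Module.Dual ℝ V) (ψv : V) : Prop :=
  ∃ α, RS.PairsIn C ψ α ∧ RS.CoPairsIn C α ψv

/-- `ψ ∈ Ψ_C`. -/
def IsFundWeightOf (C : Set V) (ψ : Module.Dual ℝ V) : Prop := ∃ α, RS.PairsIn C ψ α

/-- `Φ(ψ) = {α ∈ Φ : ⟨α, ψ̌⟩ ≥ 0}` (described via the coweight `ψv = ψ̌`). -/
def phiNonneg (ψv : V) : Set (Module.Dual ℝ V) := {α | α ∈ RS.roots ∧ 0 ≤ α ψv}

/-- `Φ^ψ = {α ∈ Φ : ⟨α, ψ̌⟩ = 0}` (described via the coweight `ψv = ψ̌`). -/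
def phiZero (ψv : V) : Set (Module.Dual ℝ V) := {α | α ∈ RS.roots ∧ α ψv = 0}

/-- The set `W̃_ψ` of `w ∈ W̃` with `w⁻¹(Φ̃^ψ_{>0}) ⊂ Φ̃_{>0}`; here `Φψ = Φ^ψ`,
`P` is the chosen positive system of `Φ^ψ` and `C₀` determines `Φ̃_{>0}`. -/
def WpsiSet (C₀ : Set V) (Φψ P : Set (Module.Dual ℝ V)) : Set (Equiv.Perm V) :=
  {w | ∀ α ∈ RS.roots ∩ Φψ, ∀ n : ℤ, (0 < n ∨ (n = 0 ∧ α ∈ P)) →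
      RS.IsPosAff (RS.pos C₀) (fun v => aev α n (w v))}

/-- Admissibility of a tuple `w̄ ∈ W̃^𝒞`: `w_{s_α(C)} ≤_α w_C` for all `C ∈ 𝒞`,
`α ∈ Δ_C`. -/
def AdmissibleW (C₀ : Set V) (w : RS.ChamberT → Equiv.Perm V) : Prop :=
  ∀ C : RS.ChamberT, ∀ α ∈ RS.simples C.1, ∀ C' : RS.ChamberT,
    C'.1 = ⇑(RS.sAff α 0) '' C.1 → RS.ordLE (RS.pos C₀) {α} (w C') (w C)

/-- Quasi-admissibility of a tuple `w̄ ∈ W̃^𝒞`: `w_{s_α(C)} ∈ W̃_α w_C`. -/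
def QuasiAdmissibleW (w : RS.ChamberT → Equiv.Perm V) : Prop :=
  ∀ C : RS.ChamberT, ∀ α ∈ RS.simples C.1, ∀ C' : RS.ChamberT,
    C'.1 = ⇑(RS.sAff α 0) '' C.1 → ∃ u ∈ RS.reflSubgroup α, w C' = u * w C

/-- Admissibility of a tuple `μ̄ ∈ V^𝒞`: `μ_C − μ_{s_α(C)} ∈ ℝ_{≥0} α̌`. -/
def AdmissibleV (μ : RS.ChamberT → V) : Prop :=
  ∀ C : RS.ChamberT, ∀ α ∈ RS.simples C.1, ∀ C' : RS.ChamberT,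
    C'.1 = ⇑(RS.sAff α 0) '' C.1 → ∃ c : ℝ, 0 ≤ c ∧ μ C - μ C' = c • RS.coroot α

/-- Quasi-admissibility of a tuple `μ̄ ∈ V^𝒞`: `μ_C − μ_{s_α(C)} ∈ ℝ α̌`. -/
def QuasiAdmissibleV (μ : RS.ChamberT → V) : Prop :=
  ∀ C : RS.ChamberT, ∀ α ∈ RS.simples C.1, ∀ C' : RS.ChamberT,
    C'.1 = ⇑(RS.sAff α 0) '' C.1 → ∃ c : ℝ, μ C - μ C' = c • RS.coroot α

/-- `m`-regularity of a tuple `μ̄ ∈ V^𝒞`: `⟨α, μ_C⟩ ≥ m` for every `C ∈ 𝒞` and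
`α ∈ Φ_C`. -/
def RegularVAt (m : ℝ) (μ : RS.ChamberT → V) : Prop :=
  ∀ C : RS.ChamberT, ∀ α ∈ RS.pos C.1, m ≤ α (μ C)

/-- `m`-regularity of a tuple `w̄ ∈ W̃^𝒞`. -/
def RegularWAt (m : ℝ) (w : RS.ChamberT → Equiv.Perm V) : Prop :=
  RS.RegularVAt m (fun C => piL (w C))

/-- Regularity of a tuple `μ̄ ∈ V^𝒞`. -/
def RegularV (μ : RS.ChamberT → V) : Prop := ∃ m : ℝ, 0 < m ∧ RS.RegularVAt m μ

/-- Regularity of a tuple `w̄ ∈ W̃^𝒞`. -/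
def RegularW (w : RS.ChamberT → Equiv.Perm V) : Prop := ∃ m : ℝ, 0 < m ∧ RS.RegularWAt m w

/-- `e` is the quasi-admissible tuple `ē_ψ` corresponding to the standard basis vector
`e_ψ ∈ ℤ^Ψ`:  `(ē_ψ)_C = α̌` if `α ∈ Δ_C` corresponds to `ψ ∈ Ψ_C`, and `= 0` if
`ψ ∉ Ψ_C`. -/
def IsEPsiTuple (ψ : Module.Dual ℝ V) (e : RS.ChamberT → V) : Prop :=
  ∀ C : RS.ChamberT,
    (∀ α, RS.PairsIn C.1 ψ α → e C = RS.coroot α) ∧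
      ((¬∃ α, RS.PairsIn C.1 ψ α) → e C = 0)

end RootSystemData


section AuxStmt16

namespace RootSystemData

variable {V : Type*} [AddCommGroup V] [Module ℝ V] (RS : RootSystemData V)

/-- The averaged bilinear form `p(x,y) = ∑_{γ∈Φ} γ(x)γ(y)`. -/
noncomputable def pf (x y : V) : ℝ := ∑ γ ∈ RS.finite.toFinset, γ x * γ y

lemma pf_symm (x y : V) : RS.pf x y = RS.pf y x :=
  Finset.sum_congr rfl fun γ _ => mul_comm _ _

lemma pf_self_nonneg (x : V) : 0 ≤ RS.pf x x :=
  Finset.sum_nonneg fun γ _ => mul_self_nonneg _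

lemma neg_mem {α : Module.Dual ℝ V} (h : α ∈ RS.roots) : -α ∈ RS.roots := by
  have h2 := RS.root_coroot_two α h
  have := RS.reflect_mem α h α h
  have heq : α - α (RS.coroot α) • α = -α := by rw [h2]; module
  rwa [heq] at this

lemma pf_reflect {α : Module.Dual ℝ V} (hα : α ∈ RS.roots) (x y : V) :
    RS.pf x y = ∑ γ ∈ RS.finite.toFinset,
      (γ x - γ (RS.coroot α) * α x) * (γ y - γ (RS.coroot α) * α y) := by
  have h2 := RS.root_coroot_two α hα
  set i : Module.Dual ℝ V → Module.Dual ℝ V := fun γ => γ - γ (RS.coroot α) • α with hi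
  have hmem : ∀ γ ∈ RS.finite.toFinset, i γ ∈ RS.finite.toFinset := by
    intro γ hγ
    rw [Set.Finite.mem_toFinset] at hγ ⊢
    exact RS.reflect_mem α hα γ hγ
  have hinv : ∀ γ ∈ RS.finite.toFinset, i (i γ) = γ := by
    intro γ _
    simp only [hi, LinearMap.sub_apply, LinearMap.smul_apply, smul_eq_mul, h2]
    module
  refine Finset.sum_nbij' i i hmem hmem hinv hinv ?_
  intro γ hγ
  have h1 : (i γ) x - (i γ) (RS.coroot α) * α x = γ x := by
    simp only [hi, LinearMap.sub_apply, LinearMap.smul_apply, smul_eq_mul, h2]; ring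
  have h1' : (i γ) y - (i γ) (RS.coroot α) * α y = γ y := by
    simp only [hi, LinearMap.sub_apply, LinearMap.smul_apply, smul_eq_mul, h2]; ring
  rw [h1, h1']

lemma pf_coroot {α : Module.Dual ℝ V} (hα : α ∈ RS.roots) (x : V) :
    2 * RS.pf (RS.coroot α) x = α x * RS.pf (RS.coroot α) (RS.coroot α) := by
  have h2 := RS.root_coroot_two α hα
  have hxy : ∀ x y : V, α x * RS.pf (RS.coroot α) y + α y * RS.pf (RS.coroot α) x
      = α x * α y * RS.pf (RS.coroot α) (RS.coroot α) := by
    intro x y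
    have h := RS.pf_reflect hα x y
    have hexp : ∀ γ : Module.Dual ℝ V,
        (γ x - γ (RS.coroot α) * α x) * (γ y - γ (RS.coroot α) * α y)
          = γ x * γ y - α x * (γ (RS.coroot α) * γ y) - α y * (γ (RS.coroot α) * γ x)
            + α x * α y * (γ (RS.coroot α) * γ (RS.coroot α)) := by
      intro γ; ring
    rw [Finset.sum_congr rfl fun γ _ => hexp γ] at h
    simp only [Finset.sum_add_distrib, Finset.sum_sub_distrib, ← Finset.mul_sum] at h
    have e1 : ∑ γ ∈ RS.finite.toFinset, γ (RS.coroot α) * γ y = RS.pf (RS.coroot α) y := rfl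
    have e2 : ∑ γ ∈ RS.finite.toFinset, γ (RS.coroot α) * γ x = RS.pf (RS.coroot α) x := rfl
    have e3 : ∑ γ ∈ RS.finite.toFinset, γ (RS.coroot α) * γ (RS.coroot α)
        = RS.pf (RS.coroot α) (RS.coroot α) := rfl
    rw [e1, e2, e3] at h
    have e4 : ∑ γ ∈ RS.finite.toFinset, γ x * γ y = RS.pf x y := rfl
    rw [e4] at h
    linarith
  have h := hxy x (RS.coroot α)
  rw [h2] at h
  linarith

lemma pf_coroot_self_pos {α : Module.Dual ℝ V} (hα : α ∈ RS.roots) :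
    0 < RS.pf (RS.coroot α) (RS.coroot α) := by
  have h2 := RS.root_coroot_two α hα
  have hmem : α ∈ RS.finite.toFinset := (Set.Finite.mem_toFinset _).2 hα
  have h4 : (2:ℝ) * 2 ≤ ∑ γ ∈ RS.finite.toFinset, γ (RS.coroot α) * γ (RS.coroot α) := by
    have := Finset.single_le_sum (f := fun γ : Module.Dual ℝ V =>
      γ (RS.coroot α) * γ (RS.coroot α)) (fun γ _ => mul_self_nonneg _) hmem
    simpa [h2] using this
  unfold pf
  linarith

lemma pf_smul_left (a : ℝ) (u y : V) : RS.pf (a • u) y = a * RS.pf u y := by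
  unfold pf
  rw [Finset.mul_sum]
  refine Finset.sum_congr rfl fun γ _ => ?_
  rw [map_smul, smul_eq_mul]; ring

/-- Strict Cauchy–Schwarz for non-proportional coroots. -/
lemma pf_cs {α β : Module.Dual ℝ V} [FiniteDimensional ℝ V]
    (hα : α ∈ RS.roots) (hβ : β ∈ RS.roots) (hne : α ≠ β) (hne' : α ≠ -β) :
    RS.pf (RS.coroot α) (RS.coroot β) ^ 2
      < RS.pf (RS.coroot α) (RS.coroot α) * RS.pf (RS.coroot β) (RS.coroot β) := by
  set Na := RS.pf (RS.coroot α) (RS.coroot α) with hNa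
  set Nb := RS.pf (RS.coroot β) (RS.coroot β) with hNb
  set p := RS.pf (RS.coroot α) (RS.coroot β) with hp
  have hNa0 : 0 < Na := RS.pf_coroot_self_pos hα
  have hNb0 : 0 < Nb := RS.pf_coroot_self_pos hβ
  set z : V := Nb • RS.coroot α - p • RS.coroot β with hz
  have hzz : RS.pf z z = Nb * (Na * Nb - p ^ 2) := by
    have hexpand : ∀ γ : Module.Dual ℝ V, γ z * γ z
        = Nb ^ 2 * (γ (RS.coroot α) * γ (RS.coroot α))
          - 2 * Nb * p * (γ (RS.coroot α) * γ (RS.coroot β))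
          + p ^ 2 * (γ (RS.coroot β) * γ (RS.coroot β)) := by
      intro γ
      simp only [hz, map_sub, map_smul, smul_eq_mul]
      ring
    unfold pf
    rw [Finset.sum_congr rfl fun γ _ => hexpand γ]
    simp only [Finset.sum_add_distrib, Finset.sum_sub_distrib, ← Finset.mul_sum]
    have e1 : ∑ γ ∈ RS.finite.toFinset, γ (RS.coroot α) * γ (RS.coroot α) = Na := rfl
    have e2 : ∑ γ ∈ RS.finite.toFinset, γ (RS.coroot α) * γ (RS.coroot β) = p := rfl
    have e3 : ∑ γ ∈ RS.finite.toFinset, γ (RS.coroot β) * γ (RS.coroot β) = Nb := rfl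
    rw [e1, e2, e3]
    ring
  have hle : p ^ 2 ≤ Na * Nb := by
    have h0 : 0 ≤ RS.pf z z := RS.pf_self_nonneg z
    rw [hzz] at h0
    nlinarith
  rcases lt_or_eq_of_le hle with h | h
  · linarith
  -- Equality case: derive a contradiction.
  exfalso
  have hzz0 : RS.pf z z = 0 := by rw [hzz, ← h]; ring
  have hall : ∀ γ ∈ RS.finite.toFinset, γ z * γ z = 0 := by
    have := (Finset.sum_eq_zero_iff_of_nonneg
      (f := fun γ : Module.Dual ℝ V => γ z * γ z) (s := RS.finite.toFinset)
      (fun γ _ => mul_self_nonneg _)).1 hzz0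
    exact this
  have hz0 : z = 0 := by
    rw [← Module.forall_dual_apply_eq_zero_iff ℝ z]
    intro φ
    have hφ : φ ∈ Submodule.span ℝ RS.roots := by rw [RS.span_top]; trivial
    induction hφ using Submodule.span_induction with
    | mem γ hγ =>
      have := hall γ ((Set.Finite.mem_toFinset _).2 hγ)
      exact mul_self_eq_zero.1 this
    | zero => simp
    | add f g _ _ hf hg => simp [hf, hg]
    | smul a f _ hf => simp [hf]
  -- From z = 0: Nb • α̌ = p • β̌, hence α = (p/Na) • β, contradicting reducedness.
  have hcoroot : Nb • RS.coroot α = p • RS.coroot β := by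
    rw [sub_eq_zero] at hz0
    · exact hz0
  have hαβ : α = (p / Na) • β := by
    ext x
    have h1 : 2 * RS.pf (RS.coroot α) x = α x * Na := RS.pf_coroot hα x
    have h2 : 2 * RS.pf (RS.coroot β) x = β x * Nb := RS.pf_coroot hβ x
    have h3 : Nb * RS.pf (RS.coroot α) x = p * RS.pf (RS.coroot β) x := by
      have := congrArg (fun w => RS.pf w x) hcoroot
      simpa only [pf_smul_left] using this
    have hgoal : Nb * (Na * α x) = Nb * (p * β x) := by
      linear_combination (-Nb) * h1 + p * h2 + 2 * h3
    have h5 : Na * α x = p * β x := mul_left_cancel₀ (ne_of_gt hNb0) hgoal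
    have hNa' : Na ≠ 0 := ne_of_gt hNa0
    simp only [LinearMap.smul_apply, smul_eq_mul]
    field_simp
    linarith
  have hmem : (p / Na) • β ∈ RS.roots := hαβ ▸ hα
  rcases RS.reduced β hβ (p / Na) hmem with hc | hc
  · rw [hc, one_smul] at hαβ; exact hne hαβ
  · rw [hc] at hαβ
    exact hne' (hαβ.trans (by module))

/-- If `⟨β, α̌⟩ > 0` and `β ≠ ±α`, then `β − α` or `α − β` is a root. -/
lemma root_sub_mem {α β : Module.Dual ℝ V} [FiniteDimensional ℝ V]
    (hα : α ∈ RS.roots) (hβ : β ∈ RS.roots) (hne : β ≠ α) (hne' : β ≠ -α)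
    (hk : 0 < β (RS.coroot α)) :
    β - α ∈ RS.roots ∨ α - β ∈ RS.roots := by
  obtain ⟨k, hkk⟩ := RS.crystallographic α hα β hβ
  obtain ⟨j, hjj⟩ := RS.crystallographic β hβ α hα
  set Na := RS.pf (RS.coroot α) (RS.coroot α) with hNa
  set Nb := RS.pf (RS.coroot β) (RS.coroot β) with hNb
  set p := RS.pf (RS.coroot α) (RS.coroot β) with hp
  have hNa0 : 0 < Na := RS.pf_coroot_self_pos hα
  have hNb0 : 0 < Nb := RS.pf_coroot_self_pos hβ
  have h1 : 2 * p = α (RS.coroot β) * Na := by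
    have := RS.pf_coroot hα (RS.coroot β); linarith
  have h2 : 2 * p = β (RS.coroot α) * Nb := by
    have := RS.pf_coroot hβ (RS.coroot α)
    rw [RS.pf_symm (RS.coroot β) (RS.coroot α)] at this
    linarith
  have hp0 : 0 < p := by nlinarith
  have hj0 : 0 < α (RS.coroot β) := by nlinarith
  have hcs : p ^ 2 < Na * Nb :=
    RS.pf_cs hα hβ (fun h => hne h.symm) (fun h => hne' (by rw [h]; simp))
  have hkj : β (RS.coroot α) * α (RS.coroot β) < 4 := by nlinarith
  have hk1 : (1 : ℤ) ≤ k := by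
    have : (0 : ℝ) < (k : ℝ) := hkk ▸ hk
    exact_mod_cast this
  have hj1 : (1 : ℤ) ≤ j := by
    have : (0 : ℝ) < (j : ℝ) := hjj ▸ hj0
    exact_mod_cast this
  have hkj4 : k * j < 4 := by
    have : ((k * j : ℤ) : ℝ) < 4 := by push_cast; rw [← hkk, ← hjj]; linarith
    exact_mod_cast this
  have hone : k = 1 ∨ j = 1 := by
    by_contra hcon
    push_neg at hcon
    have hk2 : 2 ≤ k := by omega
    have hj2 : 2 ≤ j := by omega
    nlinarith
  rcases hone with h | h
  · left
    have := RS.reflect_mem α hα β hβ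
    rw [hkk, h] at this
    simpa using this
  · right
    have := RS.reflect_mem β hβ α hα
    rw [hjj, h] at this
    simpa using this

/-- Distinct simple roots of a chamber pair nonpositively. -/
lemma simple_pair_nonpos [FiniteDimensional ℝ V] (v : V) (hv : RS.IsRegularPt v)
    (C : Set V) (hC : C = {x | ∀ α ∈ RS.roots, 0 < α v → 0 < α x})
    {α β : Module.Dual ℝ V} (hα : α ∈ RS.simples C) (hβ : β ∈ RS.simples C)
    (hne : β ≠ α) : β (RS.coroot α) ≤ 0 := by
  by_contra hcon
  push_neg at hcon
  have hvC : v ∈ C := by rw [hC]; intro γ _ h; exact h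
  have hαP : α ∈ RS.pos C := hα.1
  have hβP : β ∈ RS.pos C := hβ.1
  have hαr : α ∈ RS.roots := hαP.1
  have hβr : β ∈ RS.roots := hβP.1
  have hαv : 0 < α v := hαP.2 v hvC
  have hβv : 0 < β v := hβP.2 v hvC
  have hne' : β ≠ -α := by
    intro h
    rw [h] at hβv
    simp only [LinearMap.neg_apply] at hβv
    linarith
  have hδ : β - α ∈ RS.roots := by
    rcases RS.root_sub_mem hαr hβr hne hne' hcon with h | h
    · exact h
    · have := RS.neg_mem h
      rwa [neg_sub] at this
  have hδv : (β - α) v ≠ 0 := hv _ hδ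
  have hposmem : ∀ δ ∈ RS.roots, 0 < δ v → δ ∈ RS.pos C := by
    intro δ hδr hδv
    refine ⟨hδr, ?_⟩
    intro x hx
    rw [hC] at hx
    exact hx δ hδr hδv
  rcases lt_or_gt_of_ne hδv with h | h
  · -- α - β positive: α = (α - β) + β contradicts simplicity of α
    have hmem : α - β ∈ RS.pos C := by
      refine hposmem _ (by have := RS.neg_mem hδ; rwa [neg_sub] at this) ?_
      have : (α - β) v = -((β - α) v) := by simp
      rw [this]; linarith
    exact hα.2 ⟨α - β, hmem, β, hβP, by abel⟩
  · -- β - α positive: β = (β - α) + α contradicts simplicity of β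
    have hmem : β - α ∈ RS.pos C := hposmem _ hδ h
    exact hβ.2 ⟨β - α, hmem, α, hαP, by abel⟩

/-- Key inductive lemma: positive roots evaluate large on `μ_C − d·α̌`. -/
lemma key_reg [FiniteDimensional ℝ V] (v : V) (hv : RS.IsRegularPt v)
    (C : Set V) (hC : C = {x | ∀ α ∈ RS.roots, 0 < α v → 0 < α x})
    {α : Module.Dual ℝ V} (hα : α ∈ RS.simples C) (u : V) (m d : ℝ)
    (hm : 0 ≤ m) (hd : 0 ≤ d)
    (hreg : ∀ γ ∈ RS.pos C, m + 2 * d ≤ γ u) :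
    ∀ β ∈ RS.pos C, m ≤ β u - d * β (RS.coroot α) := by
  have hvC : v ∈ C := by rw [hC]; intro γ _ h; exact h
  have hαr : α ∈ RS.simples C := hα
  suffices h : ∀ n : ℕ, ∀ β ∈ RS.pos C,
      ({γ ∈ RS.pos C | γ v < β v}).ncard ≤ n → m ≤ β u - d * β (RS.coroot α) by
    intro β hβ
    exact h _ β hβ le_rfl
  intro n
  induction n using Nat.strong_induction_on with
  | _ n ih =>
    intro β hβ hcard
    by_cases hk : β (RS.coroot α) ≤ 2
    · have h1 := hreg β hβ
      have h2 : d * β (RS.coroot α) ≤ d * 2 := mul_le_mul_of_nonneg_left hk hd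
      linarith
    push_neg at hk
    -- β is not simple
    have hβns : β ∉ RS.simples C := by
      intro hs
      by_cases hbe : β = α
      · rw [hbe, RS.root_coroot_two α hα.1.1] at hk
        linarith
      · have := RS.simple_pair_nonpos v hv C hC hα hs hbe
        linarith
    have hdec : ∃ β₁ ∈ RS.pos C, ∃ β₂ ∈ RS.pos C, β = β₁ + β₂ := by
      by_contra hcon
      exact hβns ⟨hβ, hcon⟩
    obtain ⟨β₁, h₁, β₂, h₂, hsum⟩ := hdec
    have hfin : ({γ ∈ RS.pos C | γ v < β v}).Finite :=
      RS.finite.subset (fun γ hγ => hγ.1.1)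
    have hv1 : 0 < β₁ v := h₁.2 v hvC
    have hv2 : 0 < β₂ v := h₂.2 v hvC
    have hβv : β v = β₁ v + β₂ v := by rw [hsum]; rfl
    have hlt1 : β₁ v < β v := by linarith
    have hlt2 : β₂ v < β v := by linarith
    have hsub : ∀ β' : Module.Dual ℝ V, β' ∈ RS.pos C → β' v < β v →
        ({γ ∈ RS.pos C | γ v < β' v}).ncard < ({γ ∈ RS.pos C | γ v < β v}).ncard := by
      intro β' hβ' hβ'v
      apply Set.ncard_lt_ncard _ hfin
      constructor
      · intro γ hγ
        exact ⟨hγ.1, lt_trans hγ.2 hβ'v⟩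
      · intro hcontra
        have : β' ∈ {γ ∈ RS.pos C | γ v < β' v} := hcontra ⟨hβ', hβ'v⟩
        exact absurd this.2 (lt_irrefl _)
    have hc1 := hsub β₁ h₁ hlt1
    have hc2 := hsub β₂ h₂ hlt2
    have hm1 := ih _ (Nat.lt_of_lt_of_le hc1 hcard) β₁ h₁ le_rfl
    have hm2 := ih _ (Nat.lt_of_lt_of_le hc2 hcard) β₂ h₂ le_rfl
    have hβu : β u = β₁ u + β₂ u := by rw [hsum]; rfl
    have hβc : β (RS.coroot α) = β₁ (RS.coroot α) + β₂ (RS.coroot α) := by rw [hsum]; rfl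
    rw [hβu, hβc]
    linarith

end RootSystemData

end AuxStmt16

/-- Claim 2.13(b): for `ψ ∈ Ψ`, `m, d ∈ ℕ` and an `(m+2d)`-regular
quasi-admissible tuple `μ̄ ∈ Λ^𝒞`, the quasi-admissible tuple `ν̄ = μ̄ − d·ē_ψ` is
`m`-regular. -/
theorem stmt16 {V : Type*} [AddCommGroup V] [Module ℝ V] [FiniteDimensional ℝ V]
    (RS : RootSystemData V)
    (ψ : Module.Dual ℝ V) (ψv : V) (hψ : ∃ C : RS.ChamberT, RS.IsFundPair C.1 ψ ψv)
    (m d : ℕ)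
    (μ : RS.ChamberT → V) (hμΛ : ∀ C, μ C ∈ RS.corootLattice)
    (hq : RS.QuasiAdmissibleV μ) (hreg : RS.RegularVAt ((m : ℝ) + 2 * d) μ)
    (e : RS.ChamberT → V) (he : RS.IsEPsiTuple ψ e) :
    RS.RegularVAt (m : ℝ) (fun C => μ C - (d : ℝ) • e C) := by
  intro C β hβ
  obtain ⟨v, hv, hCdef⟩ := C.2
  have hreg' : ∀ γ ∈ RS.pos C.1, (m : ℝ) + 2 * d ≤ γ (μ C) := fun γ hγ => hreg C γ hγ
  have hm0 : (0 : ℝ) ≤ (m : ℝ) := Nat.cast_nonneg m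
  have hd0 : (0 : ℝ) ≤ (d : ℝ) := Nat.cast_nonneg d
  by_cases h : ∃ a, RS.PairsIn C.1 ψ a
  · obtain ⟨a, ha⟩ := h
    have hec : e C = RS.coroot a := (he C).1 a ha
    have key := RS.key_reg v hv C.1 hCdef ha.1 (μ C) (m : ℝ) (d : ℝ) hm0 hd0 hreg' β hβ
    simp only [hec, map_sub, map_smul, smul_eq_mul]
    linarith
  · have hec : e C = 0 := (he C).2 h
    have := hreg C β hβ
    simp only [hec, smul_zero, sub_zero]
    linarith
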